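/- Let D be a strongly connected tournament on a finite vertex type V with |V| = n, let k ≥ 2, and suppose there is an ordering σ : Fin n ≃ V whose feedback arc set S = S(σ) is minimum (|S(σ)| ≤ |S(τ)| for every ordering τ) and such that the subdigraph D_S arc-induced by S is a directed path. If |S| = m, then D is k-Always Winnable if and only if gcd(k, F_{m+2}) = 1, where F denotes the Fibonacci sequence with F_0 = 0, F_1 = 1. -/

import Mathlib

set_option maxRecDepth 8000


open scoped Classical

/-- A digraph (given by its domination relation `adj`) is `k`-Always Winnable if every labeling
of the vertices by `ZMod k` can be toggled to the zero labeling: `x v` records the number of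
times vertex `v` is toggled. -/
def kAW {V : Type*} [Fintype V] (adj : V → V → Prop) (k : ℕ) : Prop :=
  ∀ lam : V → ZMod k, ∃ x : V → ZMod k, ∀ v : V,
    lam v + x v + ∑ u ∈ Finset.univ.filter (fun u => adj u v), x u = 0

/-- The feedback arc set of the digraph `adj` with respect to the vertex ordering `σ`:
all arcs `(σ j, σ i)` with `σ j → σ i` and `i < j`. -/
noncomputable def feedbackArcSet {V : Type*} [Fintype V] (adj : V → V → Prop)
    {n : ℕ} (σ : Fin n ≃ V) : Finset (V × V) :=
  Finset.univ.filter fun p : V × V => adj p.1 p.2 ∧ σ.symm p.2 < σ.symm p.1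

section Core
variable {R : Type*} [CommRing R]

/-- correction term of row `i` coming from the backward arcs along positions `g`. -/
noncomputable def auxCorr (p : ℕ) (g : ℕ → ℕ) (x : ℕ → R) (i : ℕ) : R :=
  (∑ t ∈ (Finset.range p).filter (fun t => t + 1 < p ∧ g (t+1) = i), x (g t))
  - (∑ t ∈ (Finset.range p).filter (fun t => t + 1 < p ∧ g t = i), x (g (t+1)))

/-- row `i` of the Lights Out system in partial-sum form. -/
noncomputable def auxE (p : ℕ) (g : ℕ → ℕ) (x : ℕ → R) (i : ℕ) : R :=
  (∑ j ∈ Finset.range (i+1), x j) + auxCorr p g x i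

variable {p : ℕ} {g : ℕ → ℕ}

lemma auxMono (hdec : ∀ t, t + 1 < p → g (t+1) + 2 ≤ g t) :
    ∀ t, t < p → ∀ s, s ≤ t → g t ≤ g s := by
  intro t
  induction t with
  | zero => intro _ s hs; interval_cases s; rfl
  | succ t ih =>
    intro ht s hs
    rcases Nat.eq_or_lt_of_le hs with rfl | hlt
    · exact le_refl _
    · have h1 : g (t+1) + 2 ≤ g t := hdec t ht
      have h2 : g t ≤ g s := ih (by omega) s (by omega)
      omega

lemma auxStrict (hdec : ∀ t, t + 1 < p → g (t+1) + 2 ≤ g t) :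
    ∀ s t, s < t → t < p → g t + 2 ≤ g s := by
  intro s t hst ht
  have h1 : g t ≤ g (s+1) := auxMono hdec t ht (s+1) (by omega)
  have h2 : g (s+1) + 2 ≤ g s := hdec s (by omega)
  omega

lemma auxInj (hdec : ∀ t, t + 1 < p → g (t+1) + 2 ≤ g t) :
    ∀ s t, s < p → t < p → g s = g t → s = t := by
  intro s t hs ht h
  rcases lt_trichotomy s t with hlt | rfl | hlt
  · have := auxStrict hdec s t hlt ht; omega
  · rfl
  · have := auxStrict hdec t s hlt hs; omega

lemma auxNoNb (hdec : ∀ t, t + 1 < p → g (t+1) + 2 ≤ g t) :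
    ∀ s t, s < p → t < p → g s ≠ g t + 1 := by
  intro s t hs ht h
  rcases lt_trichotomy s t with hlt | rfl | hlt
  · have := auxStrict hdec s t hlt ht; omega
  · omega
  · have := auxStrict hdec t s hlt hs; omega

lemma auxFilterIn (hdec : ∀ t, t + 1 < p → g (t+1) + 2 ≤ g t)
    {t₀ : ℕ} (ht₀ : t₀ < p) :
    (Finset.range p).filter (fun t => t + 1 < p ∧ g (t+1) = g t₀)
      = if 1 ≤ t₀ then {t₀ - 1} else ∅ := by
  split_ifs with h1
  · ext s
    simp only [Finset.mem_filter, Finset.mem_range, Finset.mem_singleton]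
    constructor
    · rintro ⟨hs, hsp, hgs⟩
      have := auxInj hdec (s+1) t₀ hsp ht₀ hgs
      omega
    · rintro rfl
      refine ⟨by omega, by omega, by congr 1; omega⟩
  · rw [Finset.filter_eq_empty_iff]
    rintro s hs ⟨hsp, hgs⟩
    have := auxInj hdec (s+1) t₀ hsp ht₀ hgs
    omega

lemma auxFilterOut (hdec : ∀ t, t + 1 < p → g (t+1) + 2 ≤ g t)
    {t₀ : ℕ} (ht₀ : t₀ < p) :
    (Finset.range p).filter (fun t => t + 1 < p ∧ g t = g t₀)
      = if t₀ + 1 < p then {t₀} else ∅ := by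
  split_ifs with h1
  · ext s
    simp only [Finset.mem_filter, Finset.mem_range, Finset.mem_singleton]
    constructor
    · rintro ⟨hs, hsp, hgs⟩
      exact auxInj hdec s t₀ hs ht₀ hgs
    · rintro rfl
      exact ⟨by omega, h1, rfl⟩
  · rw [Finset.filter_eq_empty_iff]
    rintro s hs ⟨hsp, hgs⟩
    have := auxInj hdec s t₀ (Finset.mem_range.1 hs) ht₀ hgs
    omega

lemma auxCorrAt (hdec : ∀ t, t + 1 < p → g (t+1) + 2 ≤ g t)
    {t₀ : ℕ} (ht₀ : t₀ < p) (x : ℕ → R) :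
    auxCorr p g x (g t₀)
      = (if 1 ≤ t₀ then x (g (t₀ - 1)) else 0)
        - (if t₀ + 1 < p then x (g (t₀ + 1)) else 0) := by
  rw [auxCorr, auxFilterIn hdec ht₀, auxFilterOut hdec ht₀]
  split_ifs with h1 h2 h2 <;>
    simp only [Finset.sum_singleton, Finset.sum_empty, sub_zero, zero_sub]

lemma auxCorrNotIn (x : ℕ → R) {i : ℕ} (h : ∀ t, t < p → g t ≠ i) :
    auxCorr p g x i = 0 := by
  rw [auxCorr]
  rw [Finset.filter_eq_empty_iff.2, Finset.filter_eq_empty_iff.2]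
  · simp
  · rintro s hs ⟨hsp, hgs⟩
    exact h s (Finset.mem_range.1 hs) hgs
  · rintro s hs ⟨hsp, hgs⟩
    exact h (s+1) hsp hgs

lemma auxCorrPred (hdec : ∀ t, t + 1 < p → g (t+1) + 2 ≤ g t)
    {t₀ : ℕ} (ht₀ : t₀ < p) (hg1 : 1 ≤ g t₀) (x : ℕ → R) :
    auxCorr p g x (g t₀ - 1) = 0 := by
  apply auxCorrNotIn
  intro s hs h
  exact auxNoNb hdec t₀ s ht₀ hs (by omega)

lemma auxStar {n : ℕ} (hdec : ∀ t, t + 1 < p → g (t+1) + 2 ≤ g t)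
    (hlt : ∀ t, t < p → g t < n) (x : ℕ → R)
    (hE : ∀ i, i < n → auxE p g x i = 0) {t₀ : ℕ} (ht₀ : t₀ < p) :
    x (g t₀) + (if 1 ≤ t₀ then x (g (t₀ - 1)) else 0)
      - (if t₀ + 1 < p then x (g (t₀ + 1)) else 0) = 0 := by
  by_cases h0 : g t₀ = 0
  · have h2 : ¬ (t₀ + 1 < p) := by
      intro hc
      have := hdec t₀ hc; omega
    have hE0 := hE 0 (by have := hlt t₀ ht₀; omega)
    rw [auxE] at hE0
    rw [← h0] at hE0
    rw [auxCorrAt hdec ht₀] at hE0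
    simp only [h0] at hE0 ⊢
    simpa [h2] using hE0
  · have hg1 : 1 ≤ g t₀ := by omega
    have hEa := hE (g t₀) (hlt t₀ ht₀)
    have hEb := hE (g t₀ - 1) (by have := hlt t₀ ht₀; omega)
    rw [auxE, auxCorrAt hdec ht₀] at hEa
    rw [auxE, auxCorrPred hdec ht₀ hg1] at hEb
    have hr : g t₀ - 1 + 1 = g t₀ := by omega
    rw [hr, add_zero] at hEb
    rw [Finset.sum_range_succ, hEb, zero_add] at hEa
    linear_combination hEa


lemma auxZ {n : ℕ} (hdec : ∀ t, t + 1 < p → g (t+1) + 2 ≤ g t)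
    (hlt : ∀ t, t < p → g t < n) (x : ℕ → R)
    (hE : ∀ i, i < n → auxE p g x i = 0) :
    ∀ d t₀, t₀ < p → p - 1 - t₀ = d →
      x (g t₀) = (-1)^d * (Nat.fib (d+1) : R) * x (g (p-1)) := by
  intro d
  induction d using Nat.strong_induction_on with
  | _ d ih =>
    intro t₀ ht₀ hd
    match d, hd with
    | 0, hd =>
      have h1 : t₀ = p - 1 := by omega
      subst h1
      simp
    | 1, hd =>
      have hp2 : 2 ≤ p := by omega
      have hstar := auxStar hdec hlt x hE (t₀ := p - 1) (by omega)
      rw [if_pos (by omega), if_neg (by omega), sub_zero] at hstar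
      have h1 : p - 1 - 1 = t₀ := by omega
      rw [h1] at hstar
      have : x (g t₀) = - x (g (p-1)) := by linear_combination hstar
      rw [this]
      norm_num [Nat.fib_two]
    | (e+2), hd =>
      have hstar := auxStar hdec hlt x hE (t₀ := t₀ + 1) (by omega)
      rw [if_pos (by omega), if_pos (by omega)] at hstar
      have h1 : t₀ + 1 - 1 = t₀ := by omega
      rw [h1] at hstar
      have h2 := ih (e+1) (by omega) (t₀+1) (by omega) (by omega)
      have h3 := ih e (by omega) (t₀+1+1) (by omega) (by omega)
      have h4 : x (g t₀) = x (g (t₀+1+1)) - x (g (t₀+1)) := by linear_combination hstar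
      rw [h4, h2, h3, show e+1+1 = e+2 from rfl, Nat.fib_add_two (n := e+1)]
      push_cast
      ring

lemma auxFinal {n : ℕ} (hdec : ∀ t, t + 1 < p → g (t+1) + 2 ≤ g t)
    (hlt : ∀ t, t < p → g t < n) (x : ℕ → R)
    (hE : ∀ i, i < n → auxE p g x i = 0) (hp : 1 ≤ p) :
    (Nat.fib (p+1) : R) * x (g (p-1)) = 0 := by
  have hstar := auxStar hdec hlt x hE (t₀ := 0) (by omega)
  rw [if_neg (show ¬ (1 ≤ 0) by omega), add_zero] at hstar
  rcases eq_or_lt_of_le hp with h1 | hp2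
  · have hp1 : p = 1 := h1.symm
    subst hp1
    rw [if_neg (show ¬ (0 + 1 < 1) by omega), sub_zero] at hstar
    simp [show (1:ℕ) - 1 = 0 from rfl, hstar]
  · rw [if_pos (show 0 + 1 < p by omega)] at hstar
    obtain ⟨e, rfl⟩ : ∃ e, p = e + 2 := ⟨p - 2, by omega⟩
    have h2 := auxZ hdec hlt x hE (e+1) 0 (by omega) (by omega)
    have h3 := auxZ hdec hlt x hE e 1 (by omega) (by omega)
    rw [h2, h3] at hstar
    rw [show e+2-1 = e+1 from rfl] at hstar ⊢
    have hsq : ((-1 : R)^e) * ((-1 : R)^e) = 1 := by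
      rw [← pow_add]
      exact Even.neg_one_pow ⟨e, rfl⟩
    rw [show e+2+1 = (e+1)+2 from rfl, Nat.fib_add_two (n := e+1)]
    push_cast
    linear_combination (-((-1:R)^e)) * hstar +
      (-(((Nat.fib (e+1) : R) + (Nat.fib (e+2) : R)) * x (g (e+1)))) * hsq

lemma auxRecon {n : ℕ} (x : ℕ → R)
    (hE : ∀ i, i < n → auxE p g x i = 0) (hz : ∀ t, t < p → x (g t) = 0) :
    ∀ j, j < n → x j = 0 := by
  have hc : ∀ i, auxCorr p g x i = 0 := by
    intro i
    rw [auxCorr, Finset.sum_eq_zero, Finset.sum_eq_zero, sub_zero]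
    · rintro t ht
      simp only [Finset.mem_filter, Finset.mem_range] at ht
      exact hz (t+1) ht.2.1
    · rintro t ht
      simp only [Finset.mem_filter, Finset.mem_range] at ht
      exact hz t ht.1
  have hs : ∀ i, i < n → (∑ j ∈ Finset.range (i+1), x j) = 0 := by
    intro i hi
    have := hE i hi
    rwa [auxE, hc, add_zero] at this
  intro j hj
  match j with
  | 0 => simpa using hs 0 hj
  | (j+1) =>
    have h1 := hs (j+1) hj
    have h2 := hs j (by omega)
    rw [Finset.sum_range_succ, h2, zero_add] at h1
    exact h1

lemma auxConB (hdec : ∀ t, t + 1 < p → g (t+1) + 2 ≤ g t)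
    (hp : 2 ≤ p) (c : R) (hfib : (Nat.fib (p+1) : R) * c = 0) :
    ∃ x : ℕ → R, (∀ i, auxE p g x i = 0) ∧ x (g (p-1)) = c := by
  classical
  set z : ℕ → R := fun t => (-1)^(p-1-t) * (Nat.fib (p-t) : R) * c with hzdef
  have hzval : ∀ t d, t < p → p - 1 - t = d → z t = (-1)^d * (Nat.fib (d+1) : R) * c := by
    intro t d ht hdd
    simp only [hzdef]
    rw [hdd, show p - t = d + 1 from by omega]
  set x : ℕ → R := fun i =>
    (∑ t ∈ (Finset.range p).filter (fun t => g t = i), z t)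
    - (∑ t ∈ (Finset.range p).filter (fun t => g t + 1 = i), z t) with hxdef
  have hxg : ∀ s, s < p → x (g s) = z s := by
    intro s hs
    have h1 : (Finset.range p).filter (fun t => g t = g s) = {s} := by
      ext t
      simp only [Finset.mem_filter, Finset.mem_range, Finset.mem_singleton]
      constructor
      · rintro ⟨ht, hgt⟩; exact auxInj hdec t s ht hs hgt
      · rintro rfl; exact ⟨hs, rfl⟩
    have h2 : (Finset.range p).filter (fun t => g t + 1 = g s) = ∅ := by
      rw [Finset.filter_eq_empty_iff]
      intro t ht hgt
      exact auxNoNb hdec s t hs (Finset.mem_range.1 ht) hgt.symm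
    simp only [hxdef, h1, h2, Finset.sum_singleton, Finset.sum_empty, sub_zero]
  have hps : ∀ i, (∑ j ∈ Finset.range (i+1), x j)
      = ∑ t ∈ (Finset.range p).filter (fun t => g t = i), z t := by
    intro i
    simp only [hxdef]
    rw [Finset.sum_sub_distrib]
    have e1 : ∀ (h : ℕ → ℕ), (∑ j ∈ Finset.range (i+1),
        ∑ t ∈ (Finset.range p).filter (fun t => h t = j), z t)
        = ∑ t ∈ Finset.range p, if h t < i + 1 then z t else 0 := by
      intro h
      have h0 : ∀ j, (∑ t ∈ (Finset.range p).filter (fun t => h t = j), z t)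
          = ∑ t ∈ Finset.range p, if h t = j then z t else 0 :=
        fun j => Finset.sum_filter _ _
      rw [Finset.sum_congr rfl (fun j _ => h0 j), Finset.sum_comm]
      apply Finset.sum_congr rfl
      intro t _
      rw [Finset.sum_ite_eq (Finset.range (i+1)) (h t) (fun _ => z t)]
      simp only [Finset.mem_range]
    rw [e1 g, e1 (fun t => g t + 1)]
    rw [← Finset.sum_sub_distrib, Finset.sum_filter]
    apply Finset.sum_congr rfl
    intro t _
    split_ifs <;> first | ring1 | (exfalso; omega)
  have hzstar : ∀ t₀, t₀ < p →
      z t₀ + ((if 1 ≤ t₀ then z (t₀-1) else 0) - (if t₀+1 < p then z (t₀+1) else 0)) = 0 := by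
    intro t₀ ht₀
    rcases Nat.eq_zero_or_pos t₀ with rfl | ht1
    · rw [if_neg (show ¬ (1 ≤ 0) by omega), if_pos (show 0 + 1 < p by omega)]
      rw [hzval 0 (p-1) (by omega) (by omega), hzval 1 (p-2) (by omega) (by omega)]
      obtain ⟨e, rfl⟩ : ∃ e, p = e + 2 := ⟨p - 2, by omega⟩
      rw [show e+2-1 = e+1 from rfl, show e+2-2 = e from rfl]
      rw [show e+2+1 = (e+1)+2 from rfl, Nat.fib_add_two (n := e+1)] at hfib
      push_cast at hfib ⊢
      linear_combination (-((-1:R)^e)) * hfib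
    · have ht1' : 1 ≤ t₀ := ht1
      rcases eq_or_lt_of_le (show t₀ + 1 ≤ p from ht₀) with h1 | h1
      · rw [if_pos ht1', if_neg (show ¬ (t₀ + 1 < p) by omega)]
        rw [hzval t₀ 0 (by omega) (by omega), hzval (t₀-1) 1 (by omega) (by omega)]
        norm_num [Nat.fib_one, Nat.fib_two]
      · rw [if_pos ht1', if_pos h1]
        obtain ⟨e, he⟩ : ∃ e, p - 1 - t₀ = e + 1 := ⟨p - 2 - t₀, by omega⟩
        rw [hzval t₀ (e+1) (by omega) (by omega), hzval (t₀-1) (e+2) (by omega) (by omega),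
          hzval (t₀+1) e (by omega) (by omega)]
        rw [show e+2+1 = (e+1)+2 from rfl, Nat.fib_add_two (n := e+1)]
        push_cast
        ring
  refine ⟨x, ?_, ?_⟩
  · intro i
    rw [auxE, hps]
    by_cases hex : ∃ t₀, t₀ < p ∧ g t₀ = i
    · obtain ⟨t₀, ht₀, rfl⟩ := hex
      have h1 : (Finset.range p).filter (fun t => g t = g t₀) = {t₀} := by
        ext t
        simp only [Finset.mem_filter, Finset.mem_range, Finset.mem_singleton]
        constructor
        · rintro ⟨ht, hgt⟩; exact auxInj hdec t t₀ ht ht₀ hgt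
        · rintro rfl; exact ⟨ht₀, rfl⟩
      rw [h1, Finset.sum_singleton, auxCorrAt hdec ht₀]
      have h2 : (if 1 ≤ t₀ then x (g (t₀-1)) else 0) = (if 1 ≤ t₀ then z (t₀-1) else 0) := by
        split_ifs with h
        · exact hxg _ (by omega)
        · rfl
      have h3 : (if t₀+1 < p then x (g (t₀+1)) else 0) = (if t₀+1 < p then z (t₀+1) else 0) := by
        split_ifs with h
        · exact hxg _ (by omega)
        · rfl
      rw [h2, h3]
      linear_combination hzstar t₀ ht₀
    · push_neg at hex
      rw [auxCorrNotIn x hex]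
      rw [Finset.filter_eq_empty_iff.2, Finset.sum_empty, add_zero]
      rintro t ht hgt
      exact hex t (Finset.mem_range.1 ht) hgt
  · rw [hxg (p-1) (by omega), hzval (p-1) 0 (by omega) (by omega)]
    norm_num

end Core

lemma auxSwap {V : Type*} [Fintype V] (adj : V → V → Prop)
    (hirr : ∀ v : V, ¬ adj v v)
    (htour : ∀ u v : V, u ≠ v → (adj u v ↔ ¬ adj v u))
    {n : ℕ} (σ : Fin n ≃ V) (a b : Fin n) (hab : (b : ℕ) = (a : ℕ) + 1)
    (hadj : adj (σ b) (σ a)) :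
    feedbackArcSet adj ((Equiv.swap a b).trans σ)
      = (feedbackArcSet adj σ).erase (σ b, σ a) := by
  have hs : ∀ x : Fin n, (((Equiv.swap a b) x : Fin n) : ℕ)
      = if (x:ℕ) = (a:ℕ) then (b:ℕ) else if (x:ℕ) = (b:ℕ) then (a:ℕ) else (x:ℕ) := by
    intro x
    rcases eq_or_ne x a with rfl | h1
    · simp [Equiv.swap_apply_left]
    · rcases eq_or_ne x b with rfl | h2
      · rw [Equiv.swap_apply_right, if_neg (fun h => h1 (Fin.ext h)), if_pos rfl]
      · rw [Equiv.swap_apply_of_ne_of_ne h1 h2, if_neg (fun h => h1 (Fin.ext h)),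
          if_neg (fun h => h2 (Fin.ext h))]
  ext ⟨u, v⟩
  simp only [feedbackArcSet, Finset.mem_filter, Finset.mem_univ, true_and,
    Finset.mem_erase]
  simp only [Equiv.symm_trans_apply, Equiv.symm_swap]
  by_cases hadjuv : adj u v
  · simp only [hadjuv, true_and, and_true]
    have hne : u ≠ v := fun h => hirr v (h ▸ hadjuv)
    set i := σ.symm u with hi
    set j := σ.symm v with hj
    have hu : u = σ i := (σ.apply_symm_apply u).symm
    have hv : v = σ j := (σ.apply_symm_apply v).symm
    have hij : i ≠ j := fun h => hne (by rw [hu, hv, h])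
    have hijv : (i : ℕ) ≠ (j : ℕ) := fun h => hij (Fin.ext h)
    have hpair : ((u, v) ≠ (σ b, σ a)) ↔ ¬ ((i : ℕ) = (b : ℕ) ∧ (j : ℕ) = (a : ℕ)) := by
      rw [hu, hv]
      constructor
      · intro h hh
        exact h (by rw [show i = b from Fin.ext hh.1, show j = a from Fin.ext hh.2])
      · intro h heq
        have h1 : σ i = σ b := congrArg Prod.fst heq
        have h2 : σ j = σ a := congrArg Prod.snd heq
        exact h ⟨congrArg Fin.val (σ.injective h1), congrArg Fin.val (σ.injective h2)⟩
    by_cases hc : (i : ℕ) = (a : ℕ) ∧ (j : ℕ) = (b : ℕ)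
    · exfalso
      have h1 : u = σ a := by rw [hu]; exact congrArg σ (Fin.ext hc.1)
      have h2 : v = σ b := by rw [hv]; exact congrArg σ (Fin.ext hc.2)
      have h3 : ¬ adj v u := (htour u v hne).mp hadjuv
      rw [h1, h2] at h3
      exact h3 hadj
    · constructor
      · intro hlt
        rw [Fin.lt_def, hs, hs] at hlt
        refine ⟨hpair.mpr ?_, ?_⟩
        · intro hh
          rw [hh.1, hh.2] at hlt
          split_ifs at hlt <;> omega
        · rw [Fin.lt_def]
          split_ifs at hlt <;> omega
      · rintro ⟨hp, hlt⟩
        rw [Fin.lt_def] at hlt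
        rw [Fin.lt_def, hs, hs]
        have hp' := hpair.mp hp
        split_ifs <;> omega
  · simp [hadjuv]


lemma auxGcd (k F : ℕ) (hk : 2 ≤ k) :
    (∀ c : ZMod k, (F : ZMod k) * c = 0 → c = 0) ↔ Nat.gcd k F = 1 := by
  haveI : NeZero k := ⟨by omega⟩
  constructor
  · intro h
    by_contra hg
    set d := Nat.gcd k F with hd
    have hdk : d ∣ k := Nat.gcd_dvd_left k F
    have hdF : d ∣ F := Nat.gcd_dvd_right k F
    have hd1 : 2 ≤ d := by
      rcases Nat.eq_zero_or_pos d with h0 | h0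
      · have := Nat.eq_zero_of_gcd_eq_zero_left (hd ▸ h0)
        omega
      · omega
    have hc0 : ((k / d : ℕ) : ZMod k) ≠ 0 := by
      rw [Ne, ZMod.natCast_eq_zero_iff]
      intro hdvd
      have h1 : k / d < k := Nat.div_lt_self (by omega) (by omega)
      have h2 : 0 < k / d := Nat.div_pos (Nat.le_of_dvd (by omega) hdk) (by omega)
      have := Nat.le_of_dvd h2 hdvd
      omega
    have hmul : (F : ZMod k) * ((k / d : ℕ) : ZMod k) = 0 := by
      rw [← Nat.cast_mul, ZMod.natCast_eq_zero_iff]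
      obtain ⟨F', hF'⟩ := hdF
      obtain ⟨k', hk'⟩ := hdk
      rw [hF', hk', Nat.mul_div_cancel_left k' (by omega)]
      exact ⟨F', by ring⟩
    exact hc0 (h _ hmul)
  · intro h c hc
    have hu : IsUnit (F : ZMod k) := by
      rw [ZMod.isUnit_iff_coprime]
      exact Nat.coprime_comm.mp h
    exact (hu.mul_right_eq_zero).mp hc

/-- A strongly connected tournament with a minimum feedback arc set `S` of size `m` that
arc-induces a directed path is `k`-AW iff `gcd(k, F_{m+2}) = 1`. -/
theorem kAW_iff_of_path_feedback {V : Type*} [Fintype V]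
    (adj : V → V → Prop) (hirr : ∀ v : V, ¬ adj v v)
    (htour : ∀ u v : V, u ≠ v → (adj u v ↔ ¬ adj v u))
    (hstrong : ∀ v w : V, Relation.ReflTransGen adj v w)
    (k : ℕ) (hk : 2 ≤ k)
    {n : ℕ} (hn : Fintype.card V = n) (σ : Fin n ≃ V)
    (hmin : ∀ τ : Fin n ≃ V, (feedbackArcSet adj σ).card ≤ (feedbackArcSet adj τ).card)
    -- the subdigraph arc-induced by the feedback arc set is a directed path
    (hpath : ∃ (p : ℕ) (f : Fin p → V), Function.Injective f ∧
      (∀ v : V, (∃ e ∈ feedbackArcSet adj σ, e.1 = v ∨ e.2 = v) ↔ ∃ i : Fin p, f i = v) ∧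
      (∀ u w : V, (u, w) ∈ feedbackArcSet adj σ ↔
        ∃ (i : Fin p) (h : (i : ℕ) + 1 < p), f i = u ∧ f ⟨(i : ℕ) + 1, h⟩ = w))
    (m : ℕ) (hm : (feedbackArcSet adj σ).card = m) :
    kAW adj k ↔ Nat.gcd k (Nat.fib (m + 2)) = 1 := by
  classical
  haveI : NeZero k := ⟨by omega⟩
  obtain ⟨p, f, hfinj, hfvert, hfarc⟩ := hpath
  set S := feedbackArcSet adj σ with hS
  set g : ℕ → ℕ := fun t => if h : t < p then ((σ.symm (f ⟨t, h⟩) : Fin n) : ℕ) else 0 with hg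
  have hgdef : ∀ t (h : t < p), g t = ((σ.symm (f ⟨t, h⟩) : Fin n) : ℕ) := fun t h => dif_pos h
  have hglt : ∀ t, t < p → g t < n := by
    intro t h
    rw [hgdef t h]
    exact (σ.symm (f ⟨t, h⟩)).isLt
  have hmem : ∀ u w, (u, w) ∈ S ↔ adj u w ∧ σ.symm w < σ.symm u := by
    intro u w
    have h0 : (u, w) ∈ feedbackArcSet adj σ ↔ adj u w ∧ σ.symm w < σ.symm u := by
      constructor
      · intro h
        exact (Finset.mem_filter.mp h).2
      · intro h
        exact Finset.mem_filter.mpr ⟨Finset.mem_univ _, h⟩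
    rw [hS]
    exact h0
  have harc : ∀ i j : Fin n, (adj (σ i) (σ j) ∧ (j:ℕ) < (i:ℕ)) ↔
      (∃ t, t + 1 < p ∧ g t = (i:ℕ) ∧ g (t+1) = (j:ℕ)) := by
    intro i j
    have h0 : (adj (σ i) (σ j) ∧ (j:ℕ) < (i:ℕ)) ↔ (σ i, σ j) ∈ S := by
      rw [hmem, Equiv.symm_apply_apply, Equiv.symm_apply_apply, Fin.lt_def]
    rw [h0, hfarc]
    constructor
    · rintro ⟨t, ht, h1, h2⟩
      refine ⟨(t:ℕ), ht, ?_, ?_⟩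
      · rw [hgdef (t:ℕ) t.isLt]
        have : f ⟨(t:ℕ), t.isLt⟩ = σ i := by rw [Fin.eta]; exact h1
        rw [this, Equiv.symm_apply_apply]
      · rw [hgdef ((t:ℕ)+1) ht, h2, Equiv.symm_apply_apply]
    · rintro ⟨t, ht, h1, h2⟩
      refine ⟨⟨t, by omega⟩, ht, ?_, ?_⟩
      · rw [hgdef t (by omega)] at h1
        rw [← Equiv.symm_apply_eq]
        exact Fin.ext h1
      · rw [hgdef (t+1) ht] at h2
        rw [← Equiv.symm_apply_eq]
        exact Fin.ext h2
  have harcS : ∀ t (ht : t + 1 < p), (f ⟨t, by omega⟩, f ⟨t+1, ht⟩) ∈ S := by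
    intro t ht
    rw [hfarc]
    exact ⟨⟨t, by omega⟩, ht, rfl, rfl⟩
  have hdec1 : ∀ t, t + 1 < p → g (t+1) < g t := by
    intro t ht
    have h1 := ((hmem _ _).mp (harcS t ht)).2
    rw [hgdef t (by omega), hgdef (t+1) ht]
    exact h1
  have hdec : ∀ t, t + 1 < p → g (t+1) + 2 ≤ g t := by
    intro t ht
    by_contra hcon
    have heq : g t = g (t+1) + 1 := by
      have := hdec1 t ht
      omega
    set a : Fin n := σ.symm (f ⟨t+1, ht⟩) with ha
    set b : Fin n := σ.symm (f ⟨t, by omega⟩) with hb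
    have hab : (b:ℕ) = (a:ℕ) + 1 := by
      rw [hgdef t (by omega), hgdef (t+1) ht] at heq
      exact heq
    have hfa : σ a = f ⟨t+1, ht⟩ := σ.apply_symm_apply _
    have hfb : σ b = f ⟨t, by omega⟩ := σ.apply_symm_apply _
    have hadjba : adj (σ b) (σ a) := by
      rw [hfa, hfb]
      exact ((hmem _ _).mp (harcS t ht)).1
    have hkey := auxSwap adj hirr htour σ a b hab hadjba
    have hmemS : (σ b, σ a) ∈ S := by
      rw [hfa, hfb]
      exact harcS t ht
    have hlt := hmin ((Equiv.swap a b).trans σ)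
    rw [hkey, ← hS, Finset.card_erase_of_mem hmemS] at hlt
    have hpos : 0 < S.card := Finset.card_pos.mpr ⟨_, hmemS⟩
    omega
  have hSempty : p ≤ 1 → S = ∅ := by
    intro hp
    rw [Finset.eq_empty_iff_forall_notMem]
    rintro ⟨u, w⟩ he
    rw [hfarc] at he
    obtain ⟨tf, ht, _⟩ := he
    omega
  have hcardS : 2 ≤ p → S.card = p - 1 := by
    intro hp
    have himg : S = Finset.image
        (fun r : Fin (p-1) => (f ⟨(r:ℕ), by omega⟩, f ⟨(r:ℕ)+1, by omega⟩)) Finset.univ := by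
      ext ⟨u, w⟩
      rw [hfarc]
      simp only [Finset.mem_image, Finset.mem_univ, true_and]
      constructor
      · rintro ⟨tf, ht, h1, h2⟩
        refine ⟨⟨(tf:ℕ), by omega⟩, ?_⟩
        rw [Prod.mk.injEq]
        exact ⟨h1, h2⟩
      · rintro ⟨r, hr⟩
        rw [Prod.mk.injEq] at hr
        have hrlt := r.isLt
        refine ⟨⟨(r:ℕ), by omega⟩, ?_, hr.1, hr.2⟩
        show (r:ℕ) + 1 < p
        omega
    rw [himg, Finset.card_image_of_injective _ ?_, Finset.card_univ, Fintype.card_fin]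
    intro r s h
    rw [Prod.mk.injEq] at h
    have := hfinj h.1
    rw [Fin.mk.injEq] at this
    exact Fin.ext this
  have hm1 : p ≤ 1 → m = 0 := by
    intro hp
    rw [← hm, hSempty hp]
    simp
  have hm2 : 2 ≤ p → m + 1 = p := by
    intro hp
    have h1 := hcardS hp
    rw [hm] at h1
    omega
  -- the Lights Out operator
  set T : (V → ZMod k) → (V → ZMod k) :=
    fun x v => x v + ∑ u ∈ Finset.univ.filter (fun u => adj u v), x u with hT
  have hTapp : ∀ x v, T x v = x v + ∑ u ∈ Finset.univ.filter (fun u => adj u v), x u :=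
    fun x v => rfl
  have hkAW : kAW adj k ↔ Function.Injective T := by
    rw [kAW]
    constructor
    · intro h
      apply Finite.injective_iff_surjective.mpr
      intro y
      obtain ⟨x, hx⟩ := h (fun v => -y v)
      refine ⟨x, funext fun v => ?_⟩
      have h1 := hx v
      rw [hTapp]
      linear_combination h1
    · intro h lam
      obtain ⟨x, hx⟩ := Finite.injective_iff_surjective.mp h (fun v => -lam v)
      refine ⟨x, fun v => ?_⟩
      have h1 : T x v = -lam v := congrFun hx v
      rw [hTapp] at h1
      linear_combination h1
  have hker : Function.Injective T ↔ ∀ x : V → ZMod k, (∀ v, T x v = 0) → x = 0 := by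
    constructor
    · intro h x hx
      apply h
      funext v
      rw [hx v, hTapp]
      simp
    · intro h x y hxy
      have h0 : ∀ v, T (x - y) v = 0 := by
        intro v
        rw [hTapp]
        simp only [Pi.sub_apply]
        rw [Finset.sum_sub_distrib]
        have h1 : T x v = T y v := congrFun hxy v
        rw [hTapp, hTapp] at h1
        linear_combination h1
      have h2 := h _ h0
      rwa [sub_eq_zero] at h2
  -- the bridge between the graph-theoretic operator and the abstract system
  have hbridge : ∀ (x' : V → ZMod k) (x : ℕ → ZMod k),
      (∀ jj (hj : jj < n), x jj = x' (σ ⟨jj, hj⟩)) → ∀ i : Fin n,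
      T x' (σ i) = auxE p g x (i : ℕ) := by
    intro x' x hcompat i
    have hxval : ∀ j : Fin n, x' (σ j) = x (j : ℕ) := by
      intro j
      rw [hcompat (j:ℕ) j.isLt]
    rw [hTapp]
    have st1 : ∑ u ∈ Finset.univ.filter (fun u => adj u (σ i)), x' u
        = ∑ j : Fin n, if adj (σ j) (σ i) then x' (σ j) else 0 := by
      rw [Finset.sum_filter]
      exact (Equiv.sum_comp σ (fun u => if adj u (σ i) then x' u else 0)).symm
    have st2 : x' (σ i) + ∑ j : Fin n, (if adj (σ j) (σ i) then x' (σ j) else 0)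
        = ∑ j : Fin n, (if j = i ∨ adj (σ j) (σ i) then x' (σ j) else 0) := by
      have hdiag : (x' (σ i)) = ∑ j : Fin n, if j = i then x' (σ j) else 0 := by
        rw [Finset.sum_ite_eq' Finset.univ i (fun j => x' (σ j))]
        simp
      rw [hdiag, ← Finset.sum_add_distrib]
      apply Finset.sum_congr rfl
      intro j _
      by_cases h1 : j = i
      · subst h1
        simp [hirr (σ j)]
      · simp [h1]
    have st3 : ∑ j : Fin n, (if j = i ∨ adj (σ j) (σ i) then x' (σ j) else 0)
        = (∑ j : Fin n, if (j:ℕ) ≤ (i:ℕ) then x' (σ j) else 0)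
          + (∑ j : Fin n, if (∃ t, t+1<p ∧ g t = (j:ℕ) ∧ g (t+1) = (i:ℕ)) then x' (σ j) else 0)
          - (∑ j : Fin n, if (∃ t, t+1<p ∧ g t = (i:ℕ) ∧ g (t+1) = (j:ℕ)) then x' (σ j) else 0) := by
      rw [← Finset.sum_add_distrib, ← Finset.sum_sub_distrib]
      apply Finset.sum_congr rfl
      intro j _
      have hBj : ∀ jv iv : ℕ, jv ≤ iv → ¬ (∃ t, t+1<p ∧ g t = jv ∧ g (t+1) = iv) := by
        rintro jv iv hle ⟨t, ht, h1, h2⟩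
        have := hdec1 t ht
        omega
      rcases lt_trichotomy ((j:ℕ)) ((i:ℕ)) with hlt | heq | hgt
      · have hne : j ≠ i := fun h => by rw [h] at hlt; omega
        have hneV : σ j ≠ σ i := fun h => hne (σ.injective h)
        have h1 : adj (σ i) (σ j) ↔ (∃ t, t+1<p ∧ g t = (i:ℕ) ∧ g (t+1) = (j:ℕ)) :=
          ⟨fun h => (harc i j).mp ⟨h, hlt⟩, fun h => ((harc i j).mpr h).1⟩
        have h2 : adj (σ j) (σ i) ↔ ¬ (∃ t, t+1<p ∧ g t = (i:ℕ) ∧ g (t+1) = (j:ℕ)) := by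
          rw [htour (σ j) (σ i) hneV, h1]
        rw [if_pos (by omega : (j:ℕ) ≤ (i:ℕ)), if_neg (hBj (j:ℕ) (i:ℕ) (by omega))]
        by_cases hout : ∃ t, t+1<p ∧ g t = (i:ℕ) ∧ g (t+1) = (j:ℕ)
        · rw [if_pos hout, if_neg]
          · ring
          · rintro (hcon | hcon)
            · exact hne hcon
            · exact (h2.mp hcon) hout
        · rw [if_neg hout, if_pos (Or.inr (h2.mpr hout))]
          ring
      · have hji : j = i := Fin.ext heq
        subst hji
        rw [if_pos (Or.inl rfl), if_pos (by omega : (j:ℕ) ≤ (j:ℕ)),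
          if_neg (hBj (j:ℕ) (j:ℕ) (by omega))]
        ring
      · have hne : j ≠ i := fun h => by rw [h] at hgt; omega
        have h1 : adj (σ j) (σ i) ↔ (∃ t, t+1<p ∧ g t = (j:ℕ) ∧ g (t+1) = (i:ℕ)) :=
          ⟨fun h => (harc j i).mp ⟨h, hgt⟩, fun h => ((harc j i).mpr h).1⟩
        rw [if_neg (by omega : ¬ ((j:ℕ) ≤ (i:ℕ))), if_neg (hBj (i:ℕ) (j:ℕ) (by omega))]
        by_cases hin : ∃ t, t+1<p ∧ g t = (j:ℕ) ∧ g (t+1) = (i:ℕ)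
        · rw [if_pos hin, if_pos (Or.inr (h1.mpr hin))]
          ring
        · rw [if_neg hin, if_neg]
          · ring
          · rintro (hcon | hcon)
            · exact hne hcon
            · exact hin (h1.mp hcon)
    have st4 : (∑ j : Fin n, if (j:ℕ) ≤ (i:ℕ) then x' (σ j) else 0)
        = ∑ jj ∈ Finset.range ((i:ℕ)+1), x jj := by
      have h1 : (∑ j : Fin n, if (j:ℕ) ≤ (i:ℕ) then x' (σ j) else 0)
          = ∑ j : Fin n, (fun jj => if jj ≤ (i:ℕ) then x jj else 0) (j : ℕ) := by
        apply Finset.sum_congr rfl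
        intro j _
        simp only
        rw [hxval j]
      rw [h1, Fin.sum_univ_eq_sum_range (fun jj => if jj ≤ (i:ℕ) then x jj else 0) n]
      rw [← Finset.sum_filter]
      congr 1
      ext jj
      simp only [Finset.mem_filter, Finset.mem_range]
      constructor
      · rintro ⟨h1, h2⟩; omega
      · intro h1
        refine ⟨by have := i.isLt; omega, by omega⟩
    have st5 : (∑ j : Fin n, if (∃ t, t+1<p ∧ g t = (j:ℕ) ∧ g (t+1) = (i:ℕ)) then x' (σ j) else 0)
        = ∑ t ∈ (Finset.range p).filter (fun t => t + 1 < p ∧ g (t+1) = (i:ℕ)), x (g t) := by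
      by_cases hex : ∃ t₀, t₀ + 1 < p ∧ g (t₀+1) = (i:ℕ)
      · obtain ⟨t₀, ht₀, hgt₀⟩ := hex
        have hfilter : (Finset.range p).filter (fun t => t + 1 < p ∧ g (t+1) = (i:ℕ)) = {t₀} := by
          ext s
          simp only [Finset.mem_filter, Finset.mem_range, Finset.mem_singleton]
          constructor
          · rintro ⟨hs, hsp, hgs⟩
            have := auxInj hdec (s+1) (t₀+1) hsp ht₀ (hgs.trans hgt₀.symm)
            omega
          · rintro rfl
            exact ⟨by omega, ht₀, hgt₀⟩
        rw [hfilter, Finset.sum_singleton]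
        have hgn : g t₀ < n := hglt t₀ (by omega)
        have hcond : ∀ j : Fin n, (∃ t, t+1<p ∧ g t = (j:ℕ) ∧ g (t+1) = (i:ℕ)) ↔ j = ⟨g t₀, hgn⟩ := by
          intro j
          constructor
          · rintro ⟨t, ht, h1, h2⟩
            have hts : t = t₀ := by
              have := auxInj hdec (t+1) (t₀+1) ht ht₀ (h2.trans hgt₀.symm)
              omega
            subst hts
            exact Fin.ext h1.symm
          · rintro rfl
            exact ⟨t₀, ht₀, rfl, hgt₀⟩
        rw [Finset.sum_congr rfl (fun j _ => if_congr (hcond j) rfl rfl)]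
        rw [Finset.sum_ite_eq' Finset.univ (⟨g t₀, hgn⟩ : Fin n) (fun j => x' (σ j))]
        simp only [Finset.mem_univ, if_pos]
        rw [hxval]
      · rw [Finset.filter_eq_empty_iff.mpr, Finset.sum_empty]
        · apply Finset.sum_eq_zero
          intro j _
          rw [if_neg]
          rintro ⟨t, ht, h1, h2⟩
          exact hex ⟨t, ht, h2⟩
        · rintro s hs ⟨hsp, hgs⟩
          exact hex ⟨s, hsp, hgs⟩
    have st6 : (∑ j : Fin n, if (∃ t, t+1<p ∧ g t = (i:ℕ) ∧ g (t+1) = (j:ℕ)) then x' (σ j) else 0)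
        = ∑ t ∈ (Finset.range p).filter (fun t => t + 1 < p ∧ g t = (i:ℕ)), x (g (t+1)) := by
      by_cases hex : ∃ t₀, t₀ + 1 < p ∧ g t₀ = (i:ℕ)
      · obtain ⟨t₀, ht₀, hgt₀⟩ := hex
        have hfilter : (Finset.range p).filter (fun t => t + 1 < p ∧ g t = (i:ℕ)) = {t₀} := by
          ext s
          simp only [Finset.mem_filter, Finset.mem_range, Finset.mem_singleton]
          constructor
          · rintro ⟨hs, hsp, hgs⟩
            exact auxInj hdec s t₀ hs (by omega) (hgs.trans hgt₀.symm)
          · rintro rfl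
            exact ⟨by omega, ht₀, hgt₀⟩
        rw [hfilter, Finset.sum_singleton]
        have hgn : g (t₀+1) < n := hglt (t₀+1) ht₀
        have hcond : ∀ j : Fin n, (∃ t, t+1<p ∧ g t = (i:ℕ) ∧ g (t+1) = (j:ℕ)) ↔ j = ⟨g (t₀+1), hgn⟩ := by
          intro j
          constructor
          · rintro ⟨t, ht, h1, h2⟩
            have hts : t = t₀ := auxInj hdec t t₀ (by omega) (by omega) (h1.trans hgt₀.symm)
            subst hts
            exact Fin.ext h2.symm
          · rintro rfl
            exact ⟨t₀, ht₀, hgt₀, rfl⟩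
        rw [Finset.sum_congr rfl (fun j _ => if_congr (hcond j) rfl rfl)]
        rw [Finset.sum_ite_eq' Finset.univ (⟨g (t₀+1), hgn⟩ : Fin n) (fun j => x' (σ j))]
        simp only [Finset.mem_univ, if_pos]
        rw [hxval]
      · rw [Finset.filter_eq_empty_iff.mpr, Finset.sum_empty]
        · apply Finset.sum_eq_zero
          intro j _
          rw [if_neg]
          rintro ⟨t, ht, h1, h2⟩
          exact hex ⟨t, ht, h1⟩
        · rintro s hs ⟨hsp, hgs⟩
          exact hex ⟨s, hsp, hgs⟩
    rw [st1, st2, st3, st4, st5, st6, auxE, auxCorr]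
    ring
  have hscal : (∀ x : V → ZMod k, (∀ v, T x v = 0) → x = 0)
      ↔ (∀ c : ZMod k, ((Nat.fib (m+2) : ℕ) : ZMod k) * c = 0 → c = 0) := by
    constructor
    · intro h c hc
      by_cases hp2 : 2 ≤ p
      · have hfib : ((Nat.fib (p+1) : ℕ) : ZMod k) * c = 0 := by
          rw [show p + 1 = m + 2 by have := hm2 hp2; omega]
          exact hc
        obtain ⟨x, hxE, hxc⟩ := auxConB (g := g) hdec hp2 c hfib
        set x' : V → ZMod k := fun v => x ((σ.symm v : Fin n) : ℕ) with hx'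
        have hcompat : ∀ jj (hj : jj < n), x jj = x' (σ ⟨jj, hj⟩) := by
          intro jj hj
          rw [hx']
          simp only [Equiv.symm_apply_apply]
        have hT0 : ∀ v, T x' v = 0 := by
          intro v
          have hb := hbridge x' x hcompat (σ.symm v)
          rw [σ.apply_symm_apply] at hb
          rw [hb]
          exact hxE _
        have hx'0 := h x' hT0
        rw [← hxc]
        have hgp : g (p-1) < n := hglt _ (by omega)
        rw [hcompat _ hgp, hx'0]
        rfl
      · have hm0 : m = 0 := hm1 (by omega)
        rw [hm0] at hc
        rw [show Nat.fib (0+2) = 1 from rfl] at hc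
        rw [Nat.cast_one, one_mul] at hc
        exact hc
    · intro h x' hT0
      set x : ℕ → ZMod k := fun jj => if hj : jj < n then x' (σ ⟨jj, hj⟩) else 0 with hx
      have hcompat : ∀ jj (hj : jj < n), x jj = x' (σ ⟨jj, hj⟩) := fun jj hj => dif_pos hj
      have hE : ∀ i, i < n → auxE p g x i = 0 := by
        intro i hi
        have hb := hbridge x' x hcompat ⟨i, hi⟩
        rw [← hb]
        exact hT0 _
      have hz : ∀ t, t < p → x (g t) = 0 := by
        rcases Nat.eq_zero_or_pos p with hp0 | hp1
        · intro t ht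
          omega
        · have hfin := auxFinal hdec hglt x hE hp1
          have hpm : p + 1 = m + 2 := by
            rcases le_or_gt p 1 with h1 | h1
            · have hp1' : p = 1 := by omega
              rw [hp1', hm1 (by omega)]
            · have := hm2 h1
              omega
          rw [hpm] at hfin
          have hc0 : x (g (p-1)) = 0 := h _ hfin
          intro t ht
          rw [auxZ hdec hglt x hE (p-1-t) t ht rfl, hc0]
          ring
      have hx0 : ∀ jj, jj < n → x jj = 0 := auxRecon x hE hz
      funext v
      have hv : ((σ.symm v : Fin n) : ℕ) < n := (σ.symm v).isLt
      have h1 : x' v = x ((σ.symm v : Fin n) : ℕ) := by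
        rw [hcompat _ hv]
        congr 1
        rw [Fin.eta, σ.apply_symm_apply]
      rw [Pi.zero_apply, h1]
      exact hx0 _ hv
  rw [hkAW, hker, hscal, auxGcd k (Nat.fib (m+2)) hk]
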